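/- arXiv:0801.3691 — 2 statements merged into one kernel-verified Lean document; each statement's English description precedes it below -/
import Mathlib

section
/- (Proposition 2.2, part 2.) Let s ∈ ℝ with s > 1, and let z ∈ ℍ satisfy im z < 1 and im(δ·z) ≤ 1 for every δ ∈ Γ. Assume there exists U > 0 such that for every t ≥ 0 the set A(z,t) is finite with Π(z,t) ≤ U·e^t. Then every set A(h,z,t), t ≥ 0, is finite, and E(z,s) = s · ∫₀^∞ e^{−s t} · Π(h,z,t) dt, where the integral is the Lebesgue integral over [0,∞) of the real-valued function t ↦ e^{−s t}·Π(h,z,t). -/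
open scoped UpperHalfPlane MatrixGroups
open UpperHalfPlane
open scoped ENNReal

noncomputable section

/-- The parabolic element `T = [[1,1],[0,1]]` of `SL(2,ℝ)`, acting on `ℍ` by `z ↦ z + 1`. -/
def T : SL(2, ℝ) := ⟨!![1, 1; 0, 1], by norm_num [Matrix.det_fin_two_of]⟩

/-- The horocycle segment `h ⊆ ℍ`: points with `-1/2 ≤ re < 1/2` and `im = 1`. -/
def horocycle : Set ℍ := {w : ℍ | -(1 / 2) ≤ w.re ∧ w.re < 1 / 2 ∧ w.im = 1}

variable (Γ : Subgroup SL(2, ℝ))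

/-- The cyclic subgroup `Γ∞` of `Γ` generated by `T`. -/
abbrev GammaInf (hT : T ∈ Γ) : Subgroup Γ := Subgroup.zpowers ⟨T, hT⟩

/-- The set of right cosets `Γ∞\Γ`. -/
abbrev Cosets (hT : T ∈ Γ) := Quotient (QuotientGroup.rightRel (GammaInf Γ hT))

variable (hT : T ∈ Γ)

/-- The term `(im (δ·z))^s` of the Eisenstein series attached to a coset `q ∈ Γ∞\Γ`
(`δ` a representative of `q`; the value is independent of the representative). -/
def eisTerm (z : ℍ) (s : ℝ) (q : Cosets Γ hT) : ℝ :=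
  (((Quotient.out q : Γ) : SL(2, ℝ)) • z).im ^ s

/-- The Eisenstein series `E(z,s) = ∑'_{q ∈ Γ∞\Γ} (im (δ·z))^s`. -/
def Eis (z : ℍ) (s : ℝ) : ℝ := ∑' q : Cosets Γ hT, eisTerm Γ hT z s q

/-- `A(z,t)`: the set of cosets `q ∈ Γ∞\Γ` admitting a representative `δ` with
`dist(i, δ·z) ≤ t`. -/
def Aset (z : ℍ) (t : ℝ) : Set (Cosets Γ hT) :=
  {q | ∃ δ : Γ, Quotient.mk (QuotientGroup.rightRel (GammaInf Γ hT)) δ = q ∧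
    dist UpperHalfPlane.I ((δ : SL(2, ℝ)) • z) ≤ t}

/-- `A(h,z,t)`: the set of cosets `q ∈ Γ∞\Γ` admitting a representative `δ` with
`-1/2 ≤ re(δ·z) < 1/2` and `infDist (δ·z) h ≤ t`. -/
def Ahset (z : ℍ) (t : ℝ) : Set (Cosets Γ hT) :=
  {q | ∃ δ : Γ, Quotient.mk (QuotientGroup.rightRel (GammaInf Γ hT)) δ = q ∧
    -(1 / 2) ≤ ((δ : SL(2, ℝ)) • z).re ∧ ((δ : SL(2, ℝ)) • z).re < 1 / 2 ∧
    Metric.infDist ((δ : SL(2, ℝ)) • z) horocycle ≤ t}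

/-! ### Auxiliary lemmas -/

theorem T_smul' (w : ℍ) : T • w = (1 : ℝ) +ᵥ w := by
  rw [UpperHalfPlane.ext_iff, coe_vadd, specialLinearGroup_apply, coe_mk]
  simp [T]
  ring

theorem T_zpow_smul' (n : ℤ) (w : ℍ) : T ^ n • w = (n : ℝ) +ᵥ w := by
  induction n using Int.induction_on generalizing w with
  | zero => simp
  | succ n ih =>
      rw [zpow_add_one, mul_smul, T_smul', ih, vadd_vadd]
      norm_num
  | pred n ih =>
      have h1 : T⁻¹ • w = (-1 : ℝ) +ᵥ w := by
        rw [inv_smul_eq_iff, T_smul', vadd_vadd]; norm_num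
      rw [zpow_sub_one, mul_smul, h1, ih, vadd_vadd]
      congr 1
      push_cast
      ring

/-- If two elements of `Γ` define the same coset, the imaginary parts of their actions agree. -/
theorem im_eq_of_mk_eq (z : ℍ) {δ δ' : Γ}
    (h : Quotient.mk (QuotientGroup.rightRel (GammaInf Γ hT)) δ =
      Quotient.mk (QuotientGroup.rightRel (GammaInf Γ hT)) δ') :
    ((δ : SL(2, ℝ)) • z).im = ((δ' : SL(2, ℝ)) • z).im := by
  obtain ⟨n, hn⟩ := QuotientGroup.rightRel_apply.mp (Quotient.exact h)
  have h3 : (δ' : SL(2, ℝ)) = T ^ n * (δ : SL(2, ℝ)) := by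
    have : δ' = (⟨T, hT⟩ : Γ) ^ n * δ := by
      rw [show ((⟨T, hT⟩ : Γ) ^ n) = δ' * δ⁻¹ from hn]; group
    rw [this]
    push_cast
    rfl
  rw [h3, mul_smul, T_zpow_smul', vadd_im]

/-- Every coset has a representative whose action has real part in `[-1/2, 1/2)`. -/
theorem exists_good_rep (z : ℍ) (δ0 : Γ) :
    ∃ δ : Γ, Quotient.mk (QuotientGroup.rightRel (GammaInf Γ hT)) δ =
        Quotient.mk (QuotientGroup.rightRel (GammaInf Γ hT)) δ0 ∧
      -(1 / 2) ≤ ((δ : SL(2, ℝ)) • z).re ∧ ((δ : SL(2, ℝ)) • z).re < 1 / 2 ∧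
      ((δ : SL(2, ℝ)) • z).im = ((δ0 : SL(2, ℝ)) • z).im := by
  set x := ((δ0 : SL(2, ℝ)) • z).re with hx
  set n : ℤ := -⌊x + 1/2⌋ with hn
  refine ⟨(⟨T, hT⟩ : Γ) ^ n * δ0, ?_, ?_⟩
  · exact Quotient.sound (QuotientGroup.rightRel_apply.mpr ⟨-n, by group⟩)
  · have hcoe : (((⟨T, hT⟩ : Γ) ^ n * δ0 : Γ) : SL(2, ℝ)) = T ^ n * (δ0 : SL(2, ℝ)) := by
      push_cast; rfl
    rw [hcoe, mul_smul, T_zpow_smul', vadd_re, vadd_im]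
    have h1 := Int.floor_le (x + 1/2)
    have h2 := Int.lt_floor_add_one (x + 1/2)
    refine ⟨?_, ?_, rfl⟩
    · show -(1/2) ≤ (n:ℝ) + x
      rw [hn]; push_cast; linarith
    · show (n:ℝ) + x < 1/2
      rw [hn]; push_cast; linarith

theorem infDist_horocycle (w : ℍ) (h1 : -(1/2) ≤ w.re) (h2 : w.re < 1/2) (h3 : w.im ≤ 1) :
    Metric.infDist w horocycle = -Real.log w.im := by
  set p : ℍ := UpperHalfPlane.mk ⟨w.re, 1⟩ (by norm_num) with hp
  have hpre : p.re = w.re := rfl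
  have hpim : p.im = 1 := rfl
  have hpmem : p ∈ horocycle := ⟨by rw [hpre]; exact h1, by rw [hpre]; exact h2, hpim⟩
  refine le_antisymm ?_ ?_
  · calc Metric.infDist w horocycle ≤ dist w p := Metric.infDist_le_dist_of_mem hpmem
    _ = -Real.log w.im := by
        rw [UpperHalfPlane.dist_of_re_eq hpre.symm, hpim, Real.log_one, Real.dist_eq, sub_zero,
          abs_of_nonpos (Real.log_nonpos w.im_pos.le h3)]
  · refine le_of_not_gt fun hlt => ?_
    obtain ⟨y, hy, hdy⟩ := (Metric.infDist_lt_iff ⟨p, hpmem⟩).1 hlt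
    have h4 : (1:ℝ) ≤ w.im * Real.exp (dist w y) := by
      have := UpperHalfPlane.im_le_im_mul_exp_dist y w
      rwa [hy.2.2, dist_comm] at this
    have h5 : Real.exp (-Real.log w.im) ≤ Real.exp (dist w y) := by
      rw [Real.exp_neg, Real.exp_log w.im_pos]
      rw [← div_le_iff₀' w.im_pos] at h4
      simpa using h4
    exact absurd (Real.exp_le_exp.1 h5) (not_le.2 hdy)

theorem dist_I_le (w : ℍ) (t : ℝ) (ht : 0 ≤ t) (h1 : -(1/2) ≤ w.re) (h2 : w.re < 1/2)
    (h3 : w.im ≤ 1) (h4 : Real.exp (-t) ≤ w.im) :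
    dist UpperHalfPlane.I w ≤ t + 2 * Real.log 3 := by
  rw [UpperHalfPlane.dist_le_iff_le_sinh]
  have him : UpperHalfPlane.I.im = 1 := rfl
  rw [him, one_mul]
  have hd : dist (UpperHalfPlane.I : ℂ) w ≤ 3/2 := by
    rw [Complex.dist_eq_re_im]
    have hre : (UpperHalfPlane.I : ℂ).re = 0 := rfl
    have him2 : (UpperHalfPlane.I : ℂ).im = 1 := rfl
    rw [hre, him2, UpperHalfPlane.coe_re, UpperHalfPlane.coe_im]
    have h5 : (0 - w.re)^2 + (1 - w.im)^2 ≤ (3/2)^2 := by nlinarith [w.im_pos]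
    calc √((0 - w.re)^2 + (1 - w.im)^2) ≤ √((3/2)^2) := Real.sqrt_le_sqrt h5
      _ = 3/2 := by rw [Real.sqrt_sq]; norm_num
  have hsq : Real.exp (-t) = Real.exp (-t/2) ^ 2 := by
    rw [sq, ← Real.exp_add]; ring_nf
  have ha : Real.exp (-t/2) ≤ √(w.im) := by
    calc Real.exp (-t/2) = √(Real.exp (-t)) := by rw [hsq, Real.sqrt_sq (Real.exp_pos _).le]
      _ ≤ √(w.im) := Real.sqrt_le_sqrt h4
  have hsinh : Real.sinh ((t + 2 * Real.log 3)/2) =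
      (3 * Real.exp (t/2) - Real.exp (-t/2) / 3) / 2 := by
    rw [Real.sinh_eq]
    have e1 : Real.exp ((t + 2 * Real.log 3)/2) = 3 * Real.exp (t/2) := by
      rw [show (t + 2 * Real.log 3)/2 = t/2 + Real.log 3 by ring, Real.exp_add,
        Real.exp_log (by norm_num)]
      ring
    have e2 : Real.exp (-((t + 2 * Real.log 3)/2)) = Real.exp (-t/2) / 3 := by
      rw [show -((t + 2 * Real.log 3)/2) = -t/2 + -Real.log 3 by ring, Real.exp_add,
        Real.exp_neg, Real.exp_log (by norm_num)]
      ring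
    rw [e1, e2]
  rw [hsinh, div_le_div_iff₀ (by positivity) (by norm_num)]
  have hprod : Real.exp (t/2) * Real.exp (-t/2) = 1 := by
    rw [← Real.exp_add, show t/2 + -t/2 = 0 by ring, Real.exp_zero]
  have hE1 : (1:ℝ) ≤ Real.exp (t/2) := Real.one_le_exp (by linarith)
  have hE2 : Real.exp (-t/2) ≤ 1 := Real.exp_le_one_iff.2 (by linarith)
  have hapos : (0:ℝ) < Real.exp (-t/2) := Real.exp_pos _
  nlinarith [hd, ha, dist_nonneg (x := (UpperHalfPlane.I : ℂ)) (y := (w : ℂ))]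

open MeasureTheory Set in
theorem integral_exp_smul' (s a : ℝ) (hs : 0 < s) :
    ∫ t in Ioi a, Real.exp (-s * t) = Real.exp (-s * a) / s := by
  have := MeasureTheory.integral_comp_mul_left_Ioi (fun x => Real.exp (-x)) a hs
  simp only [neg_mul] at this ⊢
  rw [this, integral_exp_neg_Ioi, smul_eq_mul]
  rw [inv_mul_eq_div]

open MeasureTheory Set in
theorem lintegral_exp_smul' (s a : ℝ) (hs : 0 < s) :
    ∫⁻ t in Ici a, ENNReal.ofReal (Real.exp (-s * t)) =
      ENNReal.ofReal (Real.exp (-s * a) / s) := by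
  rw [← MeasureTheory.ofReal_integral_eq_lintegral_ofReal]
  · rw [MeasureTheory.integral_Ici_eq_integral_Ioi, integral_exp_smul' s a hs]
  · have := exp_neg_integrableOn_Ioi a hs
    simp only [neg_mul] at this
    have h2 : IntegrableOn (fun t => Real.exp (-s * t)) (Ici a) volume := by
      rw [integrableOn_Ici_iff_integrableOn_Ioi]
      simpa [neg_mul] using this
    exact h2
  · filter_upwards with x using (Real.exp_pos _).le

theorem ennreal_ncard_eq_tsum {α : Type*} (S : Set α) (hS : S.Finite) :
    (S.ncard : ℝ≥0∞) = ∑' a, S.indicator (fun _ => (1:ℝ≥0∞)) a := by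
  rw [← tsum_subtype, ENNReal.tsum_set_one, hS.encard_eq_coe_toFinset_card,
    Set.ncard_eq_toFinset_card _ hS]
  simp

open MeasureTheory Set

/-- Proposition 2.2, part 2: under the counting bound `Π(z,t) ≤ U e^t`, every `A(h,z,t)` is
finite and `E(z,s) = s ∫₀^∞ e^{-st} Π(h,z,t) dt`. -/
theorem eisenstein_eq_integral (s : ℝ) (hs : 1 < s) (z : ℍ) (hz : z.im < 1)
    (hzΓ : ∀ δ : Γ, ((δ : SL(2, ℝ)) • z).im ≤ 1)
    (U : ℝ) (hU : 0 < U)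
    (hPi : ∀ t : ℝ, 0 ≤ t →
      (Aset Γ hT z t).Finite ∧ ((Aset Γ hT z t).ncard : ℝ) ≤ U * Real.exp t) :
    (∀ t : ℝ, 0 ≤ t → (Ahset Γ hT z t).Finite) ∧
      Eis Γ hT z s =
        s * ∫ t in Set.Ioi (0 : ℝ), Real.exp (-s * t) * ((Ahset Γ hT z t).ncard : ℝ) := by
  classical
  have hs0 : (0:ℝ) < s := by linarith
  set g : Cosets Γ hT → ℝ := fun q => (((Quotient.out q : Γ) : SL(2, ℝ)) • z).im with hgdef
  have hg0 : ∀ q, 0 < g q := fun q => UpperHalfPlane.im_pos _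
  have hg1 : ∀ q, g q ≤ 1 := fun q => hzΓ _
  have him : ∀ (q : Cosets Γ hT) (δ : Γ),
      Quotient.mk (QuotientGroup.rightRel (GammaInf Γ hT)) δ = q →
      ((δ : SL(2, ℝ)) • z).im = g q := by
    intro q δ hδ
    exact im_eq_of_mk_eq Γ hT z (hδ.trans (Quotient.out_eq q).symm)
  -- characterization of `Ahset`
  have hAh : ∀ t : ℝ, 0 ≤ t → Ahset Γ hT z t = {q | Real.exp (-t) ≤ g q} := by
    intro t ht
    ext q
    constructor
    · rintro ⟨δ, hδ, h1, h2, h3⟩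
      rw [infDist_horocycle _ h1 h2 (hzΓ δ), him q δ hδ] at h3
      exact (Real.le_log_iff_exp_le (hg0 q)).mp (by linarith)
    · intro hq
      obtain ⟨δ, hmk, h1, h2, h3⟩ := exists_good_rep Γ hT z (Quotient.out q)
      have hδq : Quotient.mk (QuotientGroup.rightRel (GammaInf Γ hT)) δ = q :=
        hmk.trans (Quotient.out_eq q)
      refine ⟨δ, hδq, h1, h2, ?_⟩
      rw [infDist_horocycle _ h1 h2 (hzΓ δ), him q δ hδq]
      have := (Real.le_log_iff_exp_le (hg0 q)).mpr hq
      linarith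
  -- the sublevel sets inject into `Aset`
  have hsub : ∀ t : ℝ, 0 ≤ t →
      {q : Cosets Γ hT | Real.exp (-t) ≤ g q} ⊆ Aset Γ hT z (t + 2 * Real.log 3) := by
    intro t ht q hq
    obtain ⟨δ, hmk, h1, h2, h3⟩ := exists_good_rep Γ hT z (Quotient.out q)
    have hδq : Quotient.mk (QuotientGroup.rightRel (GammaInf Γ hT)) δ = q :=
      hmk.trans (Quotient.out_eq q)
    refine ⟨δ, hδq, dist_I_le _ t ht h1 h2 (hzΓ δ) ?_⟩
    rw [him q δ hδq]
    exact hq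
  have hlog3 : (0:ℝ) ≤ 2 * Real.log 3 := by positivity
  have hFin : ∀ t : ℝ, {q : Cosets Γ hT | Real.exp (-t) ≤ g q}.Finite := by
    intro t
    have hsub2 : {q : Cosets Γ hT | Real.exp (-t) ≤ g q} ⊆
        {q : Cosets Γ hT | Real.exp (-(max t 0)) ≤ g q} := by
      intro q hq
      exact le_trans (Real.exp_le_exp.2 (by simp [neg_le_neg_iff, le_max_left])) hq
    exact (((hPi (max t 0 + 2 * Real.log 3)
      (add_nonneg (le_max_right t 0) hlog3)).1).subset
      (hsub (max t 0) (le_max_right t 0))).subset hsub2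
  have hfin1 : ∀ t : ℝ, 0 ≤ t → (Ahset Γ hT z t).Finite := by
    intro t ht
    rw [hAh t ht]
    exact hFin t
  refine ⟨hfin1, ?_⟩
  -- cardinality bound
  have hcard : ∀ t : ℝ, 0 ≤ t →
      (({q : Cosets Γ hT | Real.exp (-t) ≤ g q}.ncard : ℝ)) ≤ U * 9 * Real.exp t := by
    intro t ht
    have h9 : Real.exp (t + 2 * Real.log 3) = 9 * Real.exp t := by
      rw [Real.exp_add, show (2:ℝ) * Real.log 3 = Real.log 9 by
        rw [show (9:ℝ) = 3^(2:ℕ) by norm_num, Real.log_pow]; push_cast; ring]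
      rw [Real.exp_log (by norm_num)]
      ring
    have hb := (hPi (t + 2 * Real.log 3) (add_nonneg ht hlog3)).2
    rw [h9] at hb
    have hc : ({q : Cosets Γ hT | Real.exp (-t) ≤ g q}.ncard : ℝ) ≤
        ((Aset Γ hT z (t + 2 * Real.log 3)).ncard : ℝ) := by
      exact_mod_cast Nat.cast_le.mpr (Set.ncard_le_ncard (hsub t ht)
        (hPi (t + 2 * Real.log 3) (add_nonneg ht hlog3)).1)
    calc ({q : Cosets Γ hT | Real.exp (-t) ≤ g q}.ncard : ℝ)
        ≤ ((Aset Γ hT z (t + 2 * Real.log 3)).ncard : ℝ) := hc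
      _ ≤ U * (9 * Real.exp t) := hb
      _ = U * 9 * Real.exp t := by ring
  -- countability of the coset space
  have hcount : Countable (Cosets Γ hT) := by
    rw [← Set.countable_univ_iff]
    have huniv : (Set.univ : Set (Cosets Γ hT)) ⊆ ⋃ n : ℕ, Aset Γ hT z n := by
      intro q _
      refine Set.mem_iUnion.2
        ⟨⌈dist UpperHalfPlane.I (((Quotient.out q : Γ) : SL(2, ℝ)) • z)⌉₊,
          Quotient.out q, Quotient.out_eq q, Nat.le_ceil _⟩
    exact Set.Countable.mono huniv
      (Set.countable_iUnion fun n => ((hPi n (Nat.cast_nonneg n)).1).countable)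
  -- per-coset exponent
  set a : Cosets Γ hT → ℝ := fun q => -Real.log (g q) with hadef
  have ha0 : ∀ q, 0 ≤ a q := fun q =>
    neg_nonneg.2 (Real.log_nonpos (hg0 q).le (hg1 q))
  have hIci : ∀ q, {t : ℝ | Real.exp (-t) ≤ g q} = Set.Ici (a q) := by
    intro q; ext t
    simp only [Set.mem_setOf_eq, Set.mem_Ici, hadef]
    rw [← Real.le_log_iff_exp_le (hg0 q)]
    constructor <;> intro h <;> linarith
  set I0 : ℝ≥0∞ := ∫⁻ t in Set.Ioi (0:ℝ),
    ENNReal.ofReal (Real.exp (-s * t)) *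
      (({q : Cosets Γ hT | Real.exp (-t) ≤ g q}).ncard : ℝ≥0∞) with hI0def
  have hmeasb : Measurable (fun u : ℝ => ENNReal.ofReal (Real.exp (-s * u))) :=
    (Real.measurable_exp.comp (measurable_id.const_mul (-s))).ennreal_ofReal
  -- pointwise expansion into a sum
  have hpt : ∀ t : ℝ,
      ENNReal.ofReal (Real.exp (-s * t)) *
          (({q : Cosets Γ hT | Real.exp (-t) ≤ g q}).ncard : ℝ≥0∞)
        = ∑' q : Cosets Γ hT,
            (Set.Ici (a q)).indicator (fun u => ENNReal.ofReal (Real.exp (-s * u))) t := by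
    intro t
    rw [ennreal_ncard_eq_tsum _ (hFin t), ← ENNReal.tsum_mul_left]
    congr 1
    funext q
    have hiff : Real.exp (-t) ≤ g q ↔ t ∈ Set.Ici (a q) := by
      constructor
      · intro h; rw [← hIci q]; exact h
      · intro h; rw [← hIci q] at h; exact h
    by_cases hcond : Real.exp (-t) ≤ g q
    · have h2 := hiff.mp hcond
      simp only [Set.indicator_apply, Set.mem_setOf_eq, hcond, h2, if_true, mul_one]
    · have h2 : t ∉ Set.Ici (a q) := fun hmem => hcond (hiff.mpr hmem)
      simp only [Set.indicator_apply, Set.mem_setOf_eq, hcond, h2, if_false, mul_zero]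
  have hswap : I0 = ∑' q : Cosets Γ hT, ∫⁻ t in Set.Ioi (0:ℝ),
      (Set.Ici (a q)).indicator (fun u => ENNReal.ofReal (Real.exp (-s * u))) t := by
    rw [hI0def, lintegral_congr hpt]
    exact lintegral_tsum fun q =>
      (hmeasb.indicator measurableSet_Ici).aemeasurable
  -- evaluation of each term
  have hterm : ∀ q : Cosets Γ hT,
      (∫⁻ t in Set.Ioi (0:ℝ),
        (Set.Ici (a q)).indicator (fun u => ENNReal.ofReal (Real.exp (-s * u))) t)
        = ENNReal.ofReal (g q ^ s / s) := by
    intro q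
    rw [lintegral_indicator measurableSet_Ici,
      Measure.restrict_restrict measurableSet_Ici]
    have hae : (Set.Ici (a q) ∩ Set.Ioi (0:ℝ) : Set ℝ) =ᵐ[volume] Set.Ici (a q) := by
      rw [MeasureTheory.ae_eq_set]
      constructor
      · rw [Set.diff_eq_empty.mpr Set.inter_subset_left]
        exact measure_empty
      · refine measure_mono_null (fun x hx => ?_) (Real.volume_singleton (a := 0))
        obtain ⟨hx1, hx2⟩ := hx
        simp only [Set.mem_inter_iff, Set.mem_Ioi, not_and, not_lt] at hx2
        have hx3 := hx2 hx1
        have : x = 0 := le_antisymm hx3 (le_trans (ha0 q) hx1)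
        simpa [Set.mem_singleton_iff] using this
    rw [Measure.restrict_congr_set hae, lintegral_exp_smul' s (a q) hs0]
    congr 1
    have harg : -s * a q = Real.log (g q) * s := by rw [hadef]; ring
    rw [harg, ← Real.rpow_def_of_pos (hg0 q)]
  -- finiteness of the integral
  have hI0top : I0 ≠ ⊤ := by
    have hptb : ∀ t ∈ Set.Ioi (0:ℝ),
        ENNReal.ofReal (Real.exp (-s * t)) *
            (({q : Cosets Γ hT | Real.exp (-t) ≤ g q}).ncard : ℝ≥0∞)
          ≤ ENNReal.ofReal (U * 9) * ENNReal.ofReal (Real.exp (-(s-1) * t)) := by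
      intro t ht
      have ht' : (0:ℝ) ≤ t := le_of_lt ht
      have h1 : (({q : Cosets Γ hT | Real.exp (-t) ≤ g q}).ncard : ℝ≥0∞)
          ≤ ENNReal.ofReal (U * 9 * Real.exp t) := by
        rw [← ENNReal.ofReal_natCast]
        exact ENNReal.ofReal_le_ofReal (by
          have := hcard t ht'
          linarith)
      calc ENNReal.ofReal (Real.exp (-s * t)) *
            (({q : Cosets Γ hT | Real.exp (-t) ≤ g q}).ncard : ℝ≥0∞)
          ≤ ENNReal.ofReal (Real.exp (-s * t)) * ENNReal.ofReal (U * 9 * Real.exp t) :=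
            mul_le_mul_right h1 _
        _ = ENNReal.ofReal (U * 9) * ENNReal.ofReal (Real.exp (-(s-1) * t)) := by
            rw [← ENNReal.ofReal_mul (Real.exp_pos _).le,
              ← ENNReal.ofReal_mul (by positivity : (0:ℝ) ≤ U * 9)]
            congr 1
            have hee : Real.exp (-s * t) * Real.exp t = Real.exp (-(s-1) * t) := by
              rw [← Real.exp_add]; congr 1; ring
            rw [← hee]; ring
    have hble : I0 ≤ ENNReal.ofReal (U * 9) *
        ∫⁻ t in Set.Ici (0:ℝ), ENNReal.ofReal (Real.exp (-(s-1) * t)) := by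
      rw [hI0def]
      calc (∫⁻ t in Set.Ioi (0:ℝ), ENNReal.ofReal (Real.exp (-s * t)) *
            (({q : Cosets Γ hT | Real.exp (-t) ≤ g q}).ncard : ℝ≥0∞))
          ≤ ∫⁻ t in Set.Ioi (0:ℝ),
              ENNReal.ofReal (U * 9) * ENNReal.ofReal (Real.exp (-(s-1) * t)) :=
            setLIntegral_mono
              (((Real.measurable_exp.comp
                (measurable_id.const_mul (-(s-1)))).ennreal_ofReal).const_mul _) hptb
        _ = ENNReal.ofReal (U * 9) *
            ∫⁻ t in Set.Ioi (0:ℝ), ENNReal.ofReal (Real.exp (-(s-1) * t)) :=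
            lintegral_const_mul' _ _ ENNReal.ofReal_ne_top
        _ ≤ ENNReal.ofReal (U * 9) *
            ∫⁻ t in Set.Ici (0:ℝ), ENNReal.ofReal (Real.exp (-(s-1) * t)) :=
            mul_le_mul_right (lintegral_mono_set Set.Ioi_subset_Ici_self) _
    refine ne_top_of_le_ne_top ?_ hble
    rw [lintegral_exp_smul' (s-1) 0 (by linarith)]
    exact ENNReal.mul_ne_top ENNReal.ofReal_ne_top ENNReal.ofReal_ne_top
  -- the series in `ℝ≥0∞`
  have hS : ENNReal.ofReal s * I0 = ∑' q : Cosets Γ hT, ENNReal.ofReal (g q ^ s) := by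
    rw [hswap, ← ENNReal.tsum_mul_left]
    congr 1
    funext q
    rw [hterm q, ← ENNReal.ofReal_mul hs0.le]
    congr 1
    field_simp
  have hStop : (∑' q : Cosets Γ hT, ENNReal.ofReal (g q ^ s)) ≠ ⊤ := by
    rw [← hS]
    exact ENNReal.mul_ne_top ENNReal.ofReal_ne_top hI0top
  -- the real series
  have hEis : Eis Γ hT z s = (∑' q : Cosets Γ hT, ENNReal.ofReal (g q ^ s)).toReal := by
    rw [ENNReal.tsum_toReal_eq (fun q => ENNReal.ofReal_ne_top)]
    have : ∀ q : Cosets Γ hT, (ENNReal.ofReal (g q ^ s)).toReal = g q ^ s := fun q =>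
      ENNReal.toReal_ofReal (Real.rpow_nonneg (hg0 q).le s)
    rw [tsum_congr this]
    rfl
  -- the real integral
  set F : ℝ → ℝ := fun t => (({q : Cosets Γ hT | Real.exp (-t) ≤ g q}).ncard : ℝ) with hFdef
  have hFmono : Monotone F := by
    intro t1 t2 h12
    have hsub3 : {q : Cosets Γ hT | Real.exp (-t1) ≤ g q} ⊆
        {q : Cosets Γ hT | Real.exp (-t2) ≤ g q} := fun q hq =>
      le_trans (Real.exp_le_exp.2 (by linarith)) hq
    exact_mod_cast Nat.cast_le.mpr (Set.ncard_le_ncard hsub3 (hFin t2))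
  have hGmeas : Measurable (fun t => Real.exp (-s * t) * F t) :=
    (Real.measurable_exp.comp (measurable_id.const_mul (-s))).mul hFmono.measurable
  have hJ : (∫ t in Set.Ioi (0:ℝ), Real.exp (-s * t) * ((Ahset Γ hT z t).ncard : ℝ))
      = I0.toReal := by
    have hEqOn : Set.EqOn (fun t => Real.exp (-s * t) * ((Ahset Γ hT z t).ncard : ℝ))
        (fun t => Real.exp (-s * t) * F t) (Set.Ioi (0:ℝ)) := by
      intro t ht
      simp only [hFdef]
      rw [hAh t (le_of_lt ht)]
    rw [setIntegral_congr_fun measurableSet_Ioi hEqOn,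
      integral_eq_lintegral_of_nonneg_ae
        (ae_of_all _ fun t => mul_nonneg (Real.exp_pos _).le (Nat.cast_nonneg _))
        hGmeas.aestronglyMeasurable]
    congr 1
    rw [hI0def]
    refine lintegral_congr fun t => ?_
    rw [ENNReal.ofReal_mul (Real.exp_pos _).le, ENNReal.ofReal_natCast]
  rw [hEis, ← hS, ENNReal.toReal_mul, ENNReal.toReal_ofReal hs0.le, hJ]
end
end

section
/- (Core estimate of Lemma 2.6.) Let s ∈ ℝ with s > 1 and z ∈ ℍ. Assume the function q ↦ (im(δ·z))^s on Γ∞\Γ (δ any representative of q) is summable. Then for every δ₀ ∈ Γ with im(δ₀·z) ≤ 1, one has E(z,s) ≥ Real.exp (−s · Metric.infDist (δ₀·z) h). -/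
open scoped UpperHalfPlane MatrixGroups
open UpperHalfPlane

noncomputable section

lemma im_T_smul (w : ℍ) : (T • w).im = w.im := by
  rw [UpperHalfPlane.specialLinearGroup_apply, UpperHalfPlane.mk_im]
  have e00 : T 0 0 = 1 := rfl
  have e01 : T 0 1 = 1 := rfl
  have e10 : T 1 0 = 0 := rfl
  have e11 : T 1 1 = 1 := rfl
  rw [e00, e01, e10, e11]
  simp

lemma im_T_zpow_smul (n : ℤ) (w : ℍ) : ((T ^ n) • w).im = w.im := by
  induction n using Int.induction_on generalizing w with
  | zero => simp
  | succ k ih => rw [zpow_add_one, mul_smul, ih, im_T_smul]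
  | pred k ih =>
    have : ((T ^ (-(k:ℤ) - 1)) • w).im = (T • (T ^ (-(k:ℤ) - 1)) • w).im := (im_T_smul _).symm
    rw [this, ← mul_smul, ← zpow_one_add, show (1 + (-(k:ℤ) - 1)) = -(k:ℤ) from by ring, ih]

lemma I_mem_horocycle : UpperHalfPlane.I ∈ horocycle := by
  refine ⟨?_, ?_, ?_⟩ <;>
    norm_num [UpperHalfPlane.I, horocycle, UpperHalfPlane.re, UpperHalfPlane.im]

lemma neg_log_im_le_infDist (w : ℍ) (hw : w.im ≤ 1) :
    -Real.log w.im ≤ Metric.infDist w horocycle := by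
  by_contra hlt
  push_neg at hlt
  obtain ⟨p, hp, hd⟩ := (Metric.infDist_lt_iff ⟨UpperHalfPlane.I, I_mem_horocycle⟩).mp hlt
  have h1 : p.im ≤ w.im * Real.exp (dist p w) := UpperHalfPlane.im_le_im_mul_exp_dist p w
  rw [hp.2.2] at h1
  have hwpos : 0 < w.im := w.im_pos
  have : Real.exp (-Real.log w.im) ≤ Real.exp (dist p w) := by
    rw [Real.exp_neg, Real.exp_log hwpos]
    rw [← one_div]
    rw [div_le_iff₀ hwpos] at *
    linarith [mul_comm w.im (Real.exp (dist p w)) ▸ h1]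
  have := Real.exp_le_exp.mp this
  rw [dist_comm] at hd
  linarith

variable (Γ : Subgroup SL(2, ℝ))

variable (hT : T ∈ Γ)

/-- Core estimate of Lemma 2.6: if the Eisenstein series is summable, then for every
`δ₀ ∈ Γ` with `im (δ₀·z) ≤ 1`, `E(z,s) ≥ exp (-s · infDist (δ₀·z) h)`. -/
theorem eisenstein_lower_bound (s : ℝ) (hs : 1 < s) (z : ℍ)
    (hsum : Summable (eisTerm Γ hT z s)) (δ₀ : Γ)
    (h₀ : ((δ₀ : SL(2, ℝ)) • z).im ≤ 1) :
    Real.exp (-s * Metric.infDist ((δ₀ : SL(2, ℝ)) • z) horocycle) ≤ Eis Γ hT z s := by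
  set w : ℍ := (δ₀ : SL(2, ℝ)) • z with hw
  set q : Cosets Γ hT := Quotient.mk (QuotientGroup.rightRel (GammaInf Γ hT)) δ₀ with hq
  have hrel := @Quotient.mk_out _ (QuotientGroup.rightRel (GammaInf Γ hT)) δ₀
  rw [QuotientGroup.rightRel_apply] at hrel
  obtain ⟨n, hn⟩ := hrel
  have hout : (Quotient.out q : Γ) = (⟨T, hT⟩ : Γ) ^ (-n) * δ₀ := by
    have : δ₀ * (Quotient.out q)⁻¹ = (⟨T, hT⟩ : Γ) ^ n := hn.symm
    rw [zpow_neg, ← this]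
    group
  have hterm : eisTerm Γ hT z s q = w.im ^ s := by
    unfold eisTerm
    rw [hout]
    push_cast
    rw [mul_smul, hw, im_T_zpow_smul]
  have hnonneg : ∀ r : Cosets Γ hT, 0 ≤ eisTerm Γ hT z s r := fun r =>
    Real.rpow_nonneg (UpperHalfPlane.im_pos _).le _
  have h1 : eisTerm Γ hT z s q ≤ Eis Γ hT z s :=
    Summable.le_tsum hsum q fun i _ => hnonneg i
  refine le_trans ?_ (hterm ▸ h1)
  rw [Real.rpow_def_of_pos w.im_pos]
  have hd := neg_log_im_le_infDist w h₀
  exact Real.exp_le_exp.mpr (by nlinarith)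
end
end
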